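/- For α ∈ [0,π], in the weak coin flipping protocol, any cheating strategy of Bob (given by a unitary U: |i⟩|0̄⟩|0⟩ ↦ |φ_{i,0}⟩|0⟩ + |φ_{i,1}⟩|1⟩ followed by measurement of the last qubit) wins with probability at most ((1/√2)cos²(α/2) + sin²(α/2))². -/

import Mathlib

open scoped InnerProductSpace

/-- `|ψ_{a,s}⟩ = cos(α/2)|0⟩ + (−1)^s sin(α/2)|a+1⟩` in `ℂ³`. -/
noncomputable def psit (α : ℝ) (a s : Fin 2) : Fin 3 → ℂ :=
  (Real.cos (α / 2) : ℂ) • (Pi.single 0 1 : Fin 3 → ℂ) +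
    ((-1 : ℂ) ^ (s : ℕ) * (Real.sin (α / 2) : ℂ)) • (Pi.single a.succ 1 : Fin 3 → ℂ)

/-- `|ψ_a⟩ = (1/√2)(|0⟩|ψ_{a,0}⟩ + |1⟩|ψ_{a,1}⟩)` in `ℂ² ⊗ ℂ³`. -/
noncomputable def psi (α : ℝ) (a : Fin 2) : Fin 2 × Fin 3 → ℂ :=
  fun p => (Real.sqrt 2 : ℂ)⁻¹ * psit α a p.1 p.2

/-- `|ψ_a⟩` as a vector of the inner-product space `ℂ² ⊗ ℂ³ ≅ ℂ⁶`. -/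
noncomputable def psiE (α : ℝ) (a : Fin 2) : EuclideanSpace ℂ (Fin 2 × Fin 3) :=
  (WithLp.equiv 2 ((Fin 2 × Fin 3) → ℂ)).symm (psi α a)

/-- The partial inner product `⟨u|v⟩ ∈ H` of `u ∈ ℂ²⊗ℂ³` with `v ∈ (ℂ²⊗ℂ³)⊗H`
(the projection of `v` under `|u⟩⟨u| ⊗ I`, viewed in `H`). -/
noncomputable def pInner {m : Type*} [Fintype m] (u : EuclideanSpace ℂ (Fin 2 × Fin 3))
    (v : EuclideanSpace ℂ ((Fin 2 × Fin 3) × m)) : EuclideanSpace ℂ m :=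
  (WithLp.equiv 2 (m → ℂ)).symm fun k =>
    ∑ p : Fin 2 × Fin 3, (starRingEnd ℂ) (u p) * v (p, k)

/-- The norm of a slice of a vector on a product index type is at most the full norm. -/
lemma norm_slice_le {n m : Type*} [Fintype n] [Fintype m]
    (u : EuclideanSpace ℂ (n × m)) (i : n) :
    ‖((WithLp.equiv 2 (m → ℂ)).symm fun k => u (i, k))‖ ≤ ‖u‖ := by
  rw [EuclideanSpace.norm_eq, EuclideanSpace.norm_eq]
  apply Real.sqrt_le_sqrt
  calc ∑ k : m, ‖u (i, k)‖ ^ 2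
      ≤ ∑ j : n, ∑ k : m, ‖u (j, k)‖ ^ 2 := by
        apply Finset.single_le_sum (f := fun j => ∑ k : m, ‖u (j, k)‖ ^ 2)
        · intro j _; positivity
        · exact Finset.mem_univ i
    _ = ∑ p : n × m, ‖u p‖ ^ 2 := by rw [Fintype.sum_prod_type]

/-- Explicit computation of the partial inner product `⟨ψ_a|v a⟩`. -/
lemma pInner_eq (α : ℝ) {m : Type*} [Fintype m]
    (φ : Fin 3 → Fin 2 → EuclideanSpace ℂ (Fin 3 × m))
    (v : Fin 2 → EuclideanSpace ℂ ((Fin 2 × Fin 3) × m))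
    (hv : ∀ (a t : Fin 2) (j : Fin 3) (k : m),
      v a ((t, j), k) = (Real.sqrt 2 : ℂ)⁻¹ *
        ((Real.cos (α / 2) : ℂ) * φ 0 (a + 1) (j, k) +
          (-1 : ℂ) ^ (t : ℕ) * (Real.sin (α / 2) : ℂ) * φ a.succ (a + 1) (j, k)))
    (a : Fin 2) :
    pInner (psiE α a) (v a) = (WithLp.equiv 2 (m → ℂ)).symm fun k =>
      ((Real.cos (α / 2) : ℂ)) ^ 2 * φ 0 (a + 1) ((0 : Fin 3), k) +
        ((Real.sin (α / 2) : ℂ)) ^ 2 * φ a.succ (a + 1) (a.succ, k) := by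
  unfold pInner
  congr 1
  funext k
  have h2 : ((Real.sqrt 2 : ℂ))⁻¹ * (Real.sqrt 2 : ℂ)⁻¹ = 2⁻¹ := by
    rw [← mul_inv]
    congr 1
    norm_cast
    exact Real.mul_self_sqrt (by norm_num)
  obtain ha | ha : a = 0 ∨ a = 1 := by omega
  all_goals subst ha
  all_goals
    simp only [hv, psiE, psi, psit, WithLp.equiv_symm_apply, PiLp.toLp_apply, WithLp.ofLp_toLp, Fintype.sum_prod_type,
      Fin.sum_univ_two, Fin.sum_univ_three, Pi.add_apply, Pi.smul_apply, Pi.single_apply,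
      smul_eq_mul, map_mul, map_add, map_inv₀, Complex.conj_ofReal, map_pow, map_neg, map_one,
      map_ofNat]
    norm_num [Fin.ext_iff]
    ring_nf
    simp only [show ((Real.sqrt 2 : ℂ))⁻¹ ^ 2 = 2⁻¹ by rw [sq]; exact h2,
      show ((0:Fin 2)).succ = (1:Fin 3) from rfl, show ((1:Fin 2)).succ = (2:Fin 3) from rfl,
      show ((1:Fin 2)) + 1 = (0:Fin 2) from rfl]
    ring_nf

set_option maxHeartbeats 1000000 in
theorem bob_cheating_bound (α : ℝ) (hα : α ∈ Set.Icc 0 Real.pi)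
    {m : Type*} [Fintype m]
    (φ : Fin 3 → Fin 2 → EuclideanSpace ℂ (Fin 3 × m))
    (hφ : ∀ i : Fin 3, ‖φ i 0‖ ^ 2 + ‖φ i 1‖ ^ 2 = 1)
    (v : Fin 2 → EuclideanSpace ℂ ((Fin 2 × Fin 3) × m))
    (hv : ∀ (a t : Fin 2) (j : Fin 3) (k : m),
      v a ((t, j), k) = (Real.sqrt 2 : ℂ)⁻¹ *
        ((Real.cos (α / 2) : ℂ) * φ 0 (a + 1) (j, k) +
          (-1 : ℂ) ^ (t : ℕ) * (Real.sin (α / 2) : ℂ) * φ a.succ (a + 1) (j, k))) :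
    (1 / 2) * ∑ a : Fin 2, ‖pInner (psiE α a) (v a)‖ ^ 2 ≤
      ((Real.sqrt 2)⁻¹ * Real.cos (α / 2) ^ 2 + Real.sin (α / 2) ^ 2) ^ 2 := by
  set c := Real.cos (α / 2) with hcdef
  set s := Real.sin (α / 2) with hsdef
  -- pointwise bound on the partial inner product
  have key : ∀ a : Fin 2, ‖pInner (psiE α a) (v a)‖ ≤
      c ^ 2 * ‖φ 0 (a + 1)‖ + s ^ 2 * ‖φ a.succ (a + 1)‖ := by
    intro a
    rw [pInner_eq α φ v hv a]
    have heq : ((WithLp.equiv 2 (m → ℂ)).symm fun k =>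
        ((c : ℂ)) ^ 2 * φ 0 (a + 1) ((0 : Fin 3), k) +
          ((s : ℂ)) ^ 2 * φ a.succ (a + 1) (a.succ, k)) =
        ((c : ℂ) ^ 2) • ((WithLp.equiv 2 (m → ℂ)).symm fun k => φ 0 (a + 1) ((0 : Fin 3), k)) +
          ((s : ℂ) ^ 2) • ((WithLp.equiv 2 (m → ℂ)).symm fun k =>
            φ a.succ (a + 1) (a.succ, k)) := rfl
    rw [heq]
    have hnc : ‖((c : ℂ)) ^ 2‖ = c ^ 2 := by
      rw [norm_pow, Complex.norm_real, Real.norm_eq_abs, sq_abs]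
    have hns : ‖((s : ℂ)) ^ 2‖ = s ^ 2 := by
      rw [norm_pow, Complex.norm_real, Real.norm_eq_abs, sq_abs]
    calc ‖_ + _‖ ≤ ‖((c : ℂ) ^ 2) • ((WithLp.equiv 2 (m → ℂ)).symm fun k =>
            φ 0 (a + 1) ((0 : Fin 3), k))‖ +
          ‖((s : ℂ) ^ 2) • ((WithLp.equiv 2 (m → ℂ)).symm fun k =>
            φ a.succ (a + 1) (a.succ, k))‖ := norm_add_le _ _
      _ ≤ c ^ 2 * ‖φ 0 (a + 1)‖ + s ^ 2 * ‖φ a.succ (a + 1)‖ := by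
          rw [norm_smul, norm_smul, hnc, hns]
          gcongr
          · exact norm_slice_le _ _
          · exact norm_slice_le _ _
  -- scalar bookkeeping
  set x0 := ‖φ 0 1‖ with hx0def
  set x1 := ‖φ 0 0‖ with hx1def
  set y0 := ‖φ 1 1‖ with hy0def
  set y1 := ‖φ 2 0‖ with hy1def
  have hx0 : 0 ≤ x0 := norm_nonneg _
  have hx1 : 0 ≤ x1 := norm_nonneg _
  have hy0' : 0 ≤ y0 := norm_nonneg _
  have hy1' : 0 ≤ y1 := norm_nonneg _
  have hx : x0 ^ 2 + x1 ^ 2 = 1 := by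
    have := hφ 0; linarith
  have hy0 : y0 ≤ 1 := by
    have h := hφ 1
    nlinarith [norm_nonneg (φ 1 0)]
  have hy1 : y1 ≤ 1 := by
    have h := hφ 2
    nlinarith [norm_nonneg (φ 2 1)]
  have hC : (0:ℝ) ≤ c ^ 2 := sq_nonneg c
  have hS : (0:ℝ) ≤ s ^ 2 := sq_nonneg s
  set r := (Real.sqrt 2)⁻¹ with hrdef
  have hr0 : 0 < r := by positivity
  have hr : r ^ 2 = 1 / 2 := by
    rw [hrdef, inv_pow, Real.sq_sqrt (by norm_num : (0:ℝ) ≤ 2)]; norm_num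
  -- bounds on the two terms
  have k0 : ‖pInner (psiE α 0) (v 0)‖ ^ 2 ≤ (c ^ 2 * x0 + s ^ 2 * y0) ^ 2 := by
    have h := key 0
    rw [show ((0:Fin 2)) + 1 = 1 from rfl, show ((0:Fin 2)).succ = (1:Fin 3) from rfl] at h
    exact pow_le_pow_left₀ (norm_nonneg _) h 2
  have k1 : ‖pInner (psiE α 1) (v 1)‖ ^ 2 ≤ (c ^ 2 * x1 + s ^ 2 * y1) ^ 2 := by
    have h := key 1
    rw [show ((1:Fin 2)) + 1 = 0 from rfl, show ((1:Fin 2)).succ = (2:Fin 3) from rfl] at h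
    exact pow_le_pow_left₀ (norm_nonneg _) h 2
  rw [Fin.sum_univ_two]
  have hsum : x0 + x1 ≤ 2 * r := by
    nlinarith [sq_nonneg (x0 - x1), sq_nonneg (x0 + x1 - 2*r), mul_pos hr0 hr0]
  have hrC : r ^ 2 * (c ^ 2) ^ 2 = (c ^ 2) ^ 2 / 2 := by rw [hr]; ring
  nlinarith [k0, k1,
    mul_nonneg (mul_nonneg hC hS) (mul_nonneg hx0 (sub_nonneg.2 hy0)),
    mul_nonneg (mul_nonneg hC hS) (mul_nonneg hx1 (sub_nonneg.2 hy1)),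
    mul_nonneg (mul_nonneg hC hS) (sub_nonneg.2 hsum),
    mul_nonneg (mul_nonneg hS hS) (by nlinarith : (0:ℝ) ≤ 1 - y0^2),
    mul_nonneg (mul_nonneg hS hS) (by nlinarith : (0:ℝ) ≤ 1 - y1^2)]
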